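/- arXiv:math/9901046 — 3 statements merged into one kernel-verified Lean document; each statement's English description precedes it below -/
import Mathlib

section
/- Let R be a commutative ring and p1(X), p2(X) two monic polynomials in C[[t]][X] such that their reductions modulo t, i.e. p1(X) mod t and p2(X) mod t in C[X], have no common roots. Then p1 and p2 generate the unit ideal in C[[t]][X] (i.e. they are coprime over C[[t]][X]). -/
open Polynomial

set_option maxHeartbeats 1000000 in
/-- Two monic polynomials over `ℂ[[t]]` whose reductions mod `t` have no common
root are coprime in `ℂ[[t]][X]`. -/
theorem stmt_0 (p₁ p₂ : Polynomial (PowerSeries ℂ))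
    (h₁ : p₁.Monic) (h₂ : p₂.Monic)
    (h : ∀ z : ℂ, ¬((p₁.map (PowerSeries.constantCoeff : PowerSeries ℂ →+* ℂ)).IsRoot z ∧
        (p₂.map (PowerSeries.constantCoeff : PowerSeries ℂ →+* ℂ)).IsRoot z)) :
    IsCoprime p₁ p₂ := by
  set R := PowerSeries ℂ
  set σ : R →+* ℂ := PowerSeries.constantCoeff
  -- reductions are coprime
  have hq : IsCoprime (p₁.map σ) (p₂.map σ) := by
    rw [← EuclideanDomain.gcd_isUnit_iff]
    by_contra hu
    have hd0 : EuclideanDomain.gcd (p₁.map σ) (p₂.map σ) ≠ 0 := by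
      intro h0
      have := EuclideanDomain.gcd_dvd_left (p₁.map σ) (p₂.map σ)
      rw [h0, zero_dvd_iff] at this
      exact (h₁.map σ).ne_zero this
    have hdeg : 0 < (EuclideanDomain.gcd (p₁.map σ) (p₂.map σ)).degree := by
      exact degree_pos_of_ne_zero_of_nonunit hd0 hu
    obtain ⟨z, hz⟩ := Complex.exists_root hdeg
    exact h z ⟨hz.dvd (EuclideanDomain.gcd_dvd_left _ _),
      hz.dvd (EuclideanDomain.gcd_dvd_right _ _)⟩
  -- lift the Bezout identity
  obtain ⟨a, b, hab⟩ := hq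
  set A := AdjoinRoot p₁
  set y : A := AdjoinRoot.mk p₁ p₂
  set J : Ideal A := Ideal.span {y}
  set Q := A ⧸ J
  set φ : Polynomial R →+* Q := (Ideal.Quotient.mk J).comp (AdjoinRoot.mk p₁)
  set ι : ℂ →+* R := algebraMap ℂ R
  have hσι : ∀ c : ℂ, σ (ι c) = c := fun c => by
    show (PowerSeries.constantCoeff : PowerSeries ℂ →+* ℂ) (algebraMap ℂ R c) = c
    rw [PowerSeries.algebraMap_apply]
    simp
  set e : Polynomial R := 1 - (a.map ι) * p₁ - (b.map ι) * p₂ with he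
  -- coefficients of e lie in I := ker σ
  set I : Ideal R := RingHom.ker σ with hI
  have hcoeff : ∀ i, e.coeff i ∈ I := by
    intro i
    have : e.map σ = 0 := by
      have hmapι : ∀ q : Polynomial ℂ, (q.map ι).map σ = q := by
        intro q
        rw [Polynomial.map_map]
        have : σ.comp ι = RingHom.id ℂ := RingHom.ext hσι
        rw [this, Polynomial.map_id]
      have : e.map σ = 1 - a * p₁.map σ - b * p₂.map σ := by
        simp [he, Polynomial.map_mul, hmapι]
      rw [this]; linear_combination -hab
    have := congrArg (fun q => Polynomial.coeff q i) this
    simpa [hI, RingHom.mem_ker] using this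
  -- φ e = 1
  have hφe : φ e = 1 := by
    have h1 : AdjoinRoot.mk p₁ e = 1 - (AdjoinRoot.mk p₁ (b.map ι)) * y := by
      simp [he, y, map_sub, map_mul, map_one]
    have h2 : (Ideal.Quotient.mk J) ((AdjoinRoot.mk p₁ (b.map ι)) * y) = 0 := by
      rw [Ideal.Quotient.eq_zero_iff_mem]
      exact Ideal.mul_mem_left _ _ (Ideal.subset_span rfl)
    show (Ideal.Quotient.mk J) (AdjoinRoot.mk p₁ e) = 1
    rw [h1, map_sub, h2, map_one, sub_zero]
  -- 1 ∈ I • ⊤ in Q as R-module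
  have hone : (1 : Q) ∈ I • (⊤ : Submodule R Q) := by
    have hsum : φ e = ∑ i ∈ e.support, (e.coeff i) • φ (Polynomial.X ^ i) := by
      conv_lhs => rw [← Polynomial.sum_C_mul_X_pow_eq e]
      rw [Polynomial.sum, map_sum]
      refine Finset.sum_congr rfl fun i _ => ?_
      rw [map_mul, Algebra.smul_def]
      congr 1
    have : φ e ∈ I • (⊤ : Submodule R Q) := by
      rw [hsum]
      exact Submodule.sum_mem _ fun i _ => Submodule.smul_mem_smul (hcoeff i) trivial
    rwa [hφe] at this
  -- I • ⊤ absorbs multiplication by Q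
  have habs : ∀ q : Q, ∀ z ∈ I • (⊤ : Submodule R Q), q * z ∈ I • (⊤ : Submodule R Q) := by
    intro q z hz
    refine Submodule.smul_induction_on hz ?_ ?_
    · intro r hr m _
      rw [mul_smul_comm]
      exact Submodule.smul_mem_smul hr trivial
    · intro z₁ z₂ h1 h2
      rw [mul_add]; exact Submodule.add_mem _ h1 h2
  have htop : (⊤ : Submodule R Q) ≤ I • (⊤ : Submodule R Q) := by
    intro q _
    have := habs q 1 hone
    rwa [mul_one] at this
  -- Nakayama
  have hjac : I ≤ Ideal.jacobson (⊥ : Ideal R) := by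
    rw [IsLocalRing.jacobson_eq_maximalIdeal (⊥ : Ideal R) bot_ne_top]
    intro x hx
    rw [IsLocalRing.mem_maximalIdeal, mem_nonunits_iff]
    intro hxu
    have : σ x ≠ 0 := by
      have := PowerSeries.isUnit_constantCoeff x hxu
      exact this.ne_zero
    exact this (RingHom.mem_ker.mp hx)
  have hfinA : Module.Finite R A := (AdjoinRoot.powerBasis' h₁).finite
  have hfinQ : Module.Finite R Q :=
    Module.Finite.of_surjective (Ideal.Quotient.mkₐ R J).toLinearMap
      (Ideal.Quotient.mkₐ_surjective R J)
  have hbot : (⊤ : Submodule R Q) = ⊥ :=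
    Submodule.eq_bot_of_le_smul_of_le_jacobson_bot I ⊤ Module.Finite.fg_top htop hjac
  -- conclude 1 ∈ span {y}
  have h10 : (1 : Q) = 0 := by
    have : (1 : Q) ∈ (⊥ : Submodule R Q) := hbot ▸ Submodule.mem_top
    simpa using this
  have hmem : (1 : A) ∈ J := by
    rw [← Ideal.Quotient.eq_zero_iff_mem]
    exact h10
  obtain ⟨v, hv⟩ := Ideal.mem_span_singleton'.mp hmem
  obtain ⟨B, rfl⟩ := AdjoinRoot.mk_surjective v
  have : AdjoinRoot.mk p₁ (B * p₂ - 1) = 0 := by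
    rw [map_sub, map_mul, map_one]
    show AdjoinRoot.mk p₁ B * y - 1 = 0
    rw [hv, sub_self]
  obtain ⟨c, hc⟩ := AdjoinRoot.mk_eq_zero.mp this
  refine ⟨-c, B, ?_⟩
  have : B * p₂ - 1 = p₁ * c := hc
  linear_combination this
end

section
/- Let g >= 1 and 0 <= d <= g-1. In the cohomology ring H^*(Sym^d(Sigma)) of the d-th symmetric product of a genus g surface, generated by classes psi_1,...,psi_{2g} of degree 1 and eta of degree 2, with relations generated by eta^r * prod_{i in I}(eta - psi_i psi_{g+i}) * prod_{j in J} psi_j * prod_{k in K} psi_{g+k} for disjoint I, J, K subsets of {1,...,g} with r + 2|I| + |J| + |K| >= d+1, the element R_k := sum_{i=0}^{alpha} [C(d-k-alpha+1, i) / C(g-k, i)] * (-theta)^i / i! * eta^{alpha - i}, with alpha = floor((d-k)/2) + 1 and theta = sum_i psi_i psi_{g+i}, satisfies: psi_1 ... psi_k * R_k = 0 in H^*(Sym^d(Sigma)) for 0 <= k <= d. -/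
open Finset

section Aux

variable {ι : Type*} [LinearOrder ι] [DecidableEq ι] {A : Type*} [Ring A]

/-- product over a finset via the sorted list -/
private def sprodA (f : ι → A) (T : Finset ι) : A :=
  ((T.sort (· ≤ ·)).map f).prod

private lemma sprodA_empty (f : ι → A) : sprodA f ∅ = 1 := by
  simp [sprodA]

private lemma pairwise_commute_map (f : ι → A) (hf : ∀ i j, Commute (f i) (f j)) :
    ∀ l : List ι, (l.map f).Pairwise Commute := by
  intro l
  induction l with
  | nil => simp
  | cons a t ih =>
    rw [List.map_cons, List.pairwise_cons]
    exact ⟨by rintro b hb; rcases List.mem_map.1 hb with ⟨j, _, rfl⟩; exact hf a j, ih⟩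

private lemma sprodA_insert (f : ι → A) (hf : ∀ i j, Commute (f i) (f j))
    {a : ι} {T : Finset ι} (ha : a ∉ T) :
    sprodA f (insert a T) = f a * sprodA f T := by
  have hperm : List.Perm ((insert a T).sort (· ≤ ·)) (a :: T.sort (· ≤ ·)) :=
    ((insert a T).sort_perm_toList (· ≤ ·)).trans
      ((Finset.toList_insert ha).trans (((T.sort_perm_toList (· ≤ ·)).symm).cons a))
  have h2 : List.Perm (((insert a T).sort (· ≤ ·)).map f) ((a :: T.sort (· ≤ ·)).map f) :=
    hperm.map f
  rw [sprodA, h2.prod_eq' (pairwise_commute_map f hf _), List.map_cons, List.prod_cons, sprodA]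

private lemma commute_sprodA (f : ι → A) (b : A) (hb : ∀ i, Commute b (f i)) (T : Finset ι) :
    Commute b (sprodA f T) := by
  apply Commute.list_prod_right
  intro y hy
  rcases List.mem_map.1 hy with ⟨j, _, rfl⟩
  exact hb j

private lemma aux_reindex (C : Finset ι) (i : ℕ) (F : Finset ι → A) :
    ∑ T ∈ C.powersetCard i, ∑ j ∈ C \ T, F (insert j T)
      = ∑ U ∈ C.powersetCard (i + 1), (i + 1) • F U := by
  have e1 : ∑ T ∈ C.powersetCard i, ∑ j ∈ C \ T, F (insert j T)
      = ∑ p ∈ (C.powersetCard i).sigma (fun T => C \ T), F (insert p.2 p.1) :=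
    Finset.sum_sigma' _ _ _
  have e2 : ∑ U ∈ C.powersetCard (i+1), ∑ _j ∈ U, F U
      = ∑ q ∈ (C.powersetCard (i+1)).sigma (fun U => U), F q.1 :=
    Finset.sum_sigma' _ _ _
  have e3 : ∀ U ∈ C.powersetCard (i+1), (i + 1) • F U = ∑ _j ∈ U, F U := by
    intro U hU
    rw [Finset.sum_const, (Finset.mem_powersetCard.1 hU).2]
  rw [e1, Finset.sum_congr rfl e3, e2]
  refine Finset.sum_nbij' (fun p => ⟨insert p.2 p.1, p.2⟩) (fun q => ⟨q.1.erase q.2, q.2⟩)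
    ?_ ?_ ?_ ?_ ?_
  · rintro ⟨T, j⟩ hp
    simp only [Finset.mem_sigma, Finset.mem_powersetCard, Finset.mem_sdiff] at hp ⊢
    obtain ⟨⟨hTC, hTcard⟩, hjC, hjT⟩ := hp
    exact ⟨⟨Finset.insert_subset hjC hTC, by rw [Finset.card_insert_of_notMem hjT, hTcard]⟩,
      Finset.mem_insert_self _ _⟩
  · rintro ⟨U, j⟩ hq
    simp only [Finset.mem_sigma, Finset.mem_powersetCard, Finset.mem_sdiff] at hq ⊢
    obtain ⟨⟨hUC, hUcard⟩, hjU⟩ := hq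
    refine ⟨⟨(Finset.erase_subset _ _).trans hUC, ?_⟩, hUC hjU, Finset.notMem_erase _ _⟩
    rw [Finset.card_erase_of_mem hjU, hUcard]
    omega
  · rintro ⟨T, j⟩ hp
    simp only [Finset.mem_sigma, Finset.mem_powersetCard, Finset.mem_sdiff] at hp
    simp [Finset.erase_insert hp.2.2]
  · rintro ⟨U, j⟩ hq
    simp only [Finset.mem_sigma, Finset.mem_powersetCard, Finset.mem_sdiff] at hq
    simp [Finset.insert_erase hq.2]
  · rintro ⟨T, j⟩ _; rfl

private lemma aux_pow_sum (x : ι → A) (hc : ∀ i j, Commute (x i) (x j))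
    (hx : ∀ j, x j * x j = 0) (C : Finset ι) (i : ℕ) :
    (∑ j ∈ C, x j) ^ i = i.factorial • ∑ T ∈ C.powersetCard i, sprodA x T := by
  induction i with
  | zero => simp [sprodA]
  | succ i ih =>
    have key : (∑ T ∈ C.powersetCard i, sprodA x T) * (∑ j ∈ C, x j)
        = (i+1) • ∑ U ∈ C.powersetCard (i+1), sprodA x U := by
      rw [Finset.sum_mul]
      have step : ∀ T ∈ C.powersetCard i, sprodA x T * (∑ j ∈ C, x j)
          = ∑ j ∈ C \ T, sprodA x (insert j T) := by
        intro T hT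
        have hTC := (Finset.mem_powersetCard.1 hT).1
        rw [Finset.mul_sum, ← Finset.sum_sdiff hTC]
        have h0 : ∀ j ∈ T, sprodA x T * x j = 0 := by
          intro j hj
          have hTe : T = insert j (T.erase j) := (Finset.insert_erase hj).symm
          rw [hTe, sprodA_insert x hc (Finset.notMem_erase _ _), mul_assoc,
            ← (commute_sprodA x (x j) (fun i => hc j i) _).eq, ← mul_assoc, hx j, zero_mul]
        have h1 : ∀ j ∈ C \ T, sprodA x T * x j = sprodA x (insert j T) := by
          intro j hj
          rw [sprodA_insert x hc (Finset.mem_sdiff.1 hj).2,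
            ← (commute_sprodA x (x j) (fun i => hc j i) T).eq]
        rw [Finset.sum_congr rfl h0, Finset.sum_const, smul_zero, add_zero,
          Finset.sum_congr rfl h1]
      rw [Finset.sum_congr rfl step, aux_reindex, ← Finset.smul_sum]
    rw [pow_succ, ih, smul_mul_assoc, key, Nat.factorial_succ, smul_smul, Nat.mul_comm]

end Aux

section Aux3
variable {ι : Type*} [LinearOrder ι] [DecidableEq ι] {A : Type*} [Ring A]

private lemma aux_prod_expand (e : A) (x : ι → A) (hc : ∀ i j, Commute (x i) (x j))
    (he : ∀ j, Commute e (x j)) (S : Finset ι) :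
    sprodA (fun i => e - x i) S
      = ∑ T ∈ S.powerset, (-1 : ℤ) ^ T.card • (sprodA x T * e ^ (S.card - T.card)) := by
  have hf : ∀ i j, Commute (e - x i) (e - x j) := fun i j =>
    ((Commute.refl e).sub_right (he j)).sub_left (((he i).symm).sub_right (hc i j))
  induction S using Finset.induction_on with
  | empty => simp [sprodA_empty]
  | insert _ _ ha ih =>
    rename_i a S
    rw [sprodA_insert _ hf ha, ih, Finset.powerset_insert, Finset.sum_union, Finset.sum_image]
    · have hcardins : (insert a S).card = S.card + 1 := Finset.card_insert_of_notMem ha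
      have h1 : ∀ T ∈ S.powerset, (-1:ℤ) ^ T.card • (sprodA x T * e ^ ((insert a S).card - T.card))
          = e * ((-1:ℤ) ^ T.card • (sprodA x T * e ^ (S.card - T.card))) := by
        intro T hT
        have htle : T.card ≤ S.card := Finset.card_le_card (Finset.mem_powerset.1 hT)
        have : (insert a S).card - T.card = (S.card - T.card) + 1 := by rw [hcardins]; omega
        rw [this, mul_smul_comm, pow_succ, ← mul_assoc,
          ((commute_sprodA x e he T).mul_right ((Commute.refl e).pow_right _)).eq]
      have h2 : ∀ T ∈ S.powerset,
          (-1:ℤ) ^ (insert a T).card • (sprodA x (insert a T) * e ^ ((insert a S).card - (insert a T).card))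
          = -(x a * ((-1:ℤ) ^ T.card • (sprodA x T * e ^ (S.card - T.card)))) := by
        intro T hT
        have haT : a ∉ T := fun h => ha (Finset.mem_powerset.1 hT h)
        have hcardT : (insert a T).card = T.card + 1 := Finset.card_insert_of_notMem haT
        have : (insert a S).card - (insert a T).card = S.card - T.card := by
          rw [hcardins, hcardT]; omega
        rw [this, hcardT, sprodA_insert x hc haT, pow_succ, mul_smul, neg_one_zsmul,
          smul_neg, mul_smul_comm, mul_assoc]
      rw [Finset.sum_congr rfl h1, Finset.sum_congr rfl h2, ← Finset.mul_sum,
        Finset.sum_neg_distrib, ← Finset.mul_sum, sub_mul, sub_eq_add_neg]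
    · intro T hT T' hT' hE
      have haT : a ∉ T := fun h => ha (Finset.mem_powerset.1 hT h)
      have haT' : a ∉ T' := fun h => ha (Finset.mem_powerset.1 hT' h)
      rw [← Finset.erase_insert haT, hE, Finset.erase_insert haT']
    · rw [Finset.disjoint_right]
      rintro T hT hT2
      rcases Finset.mem_image.1 hT with ⟨T', _, rfl⟩
      exact ha (Finset.mem_powerset.1 hT2 (Finset.mem_insert_self a T'))

end Aux3

section Aux4
variable {ι : Type*} [DecidableEq ι]

private lemma aux_swap {M : Type*} [AddCommMonoid M] (C : Finset ι) (s : ℕ) (f : Finset ι → M) :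
    ∑ S ∈ C.powersetCard s, ∑ T ∈ S.powerset, f T
      = ∑ T ∈ C.powerset, ((C.powersetCard s).filter (fun S => T ⊆ S)).card • f T := by
  have h1 : ∀ S ∈ C.powersetCard s, ∑ T ∈ S.powerset, f T
      = ∑ T ∈ C.powerset, if T ⊆ S then f T else 0 := by
    intro S hS
    rw [← Finset.sum_filter]
    apply Finset.sum_congr _ (fun _ _ => rfl)
    ext T
    simp only [Finset.mem_filter, Finset.mem_powerset]
    exact ⟨fun h => ⟨h.trans (Finset.mem_powersetCard.1 hS).1, h⟩, fun h => h.2⟩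
  rw [Finset.sum_congr rfl h1, Finset.sum_comm]
  refine Finset.sum_congr rfl fun T _ => ?_
  rw [← Finset.sum_filter, Finset.sum_const]

private lemma aux_count (C T : Finset ι) (hT : T ⊆ C) (s : ℕ) :
    ((C.powersetCard s).filter (fun S => T ⊆ S)).card
      = if T.card ≤ s then (C.card - T.card).choose (s - T.card) else 0 := by
  split_ifs with h
  · rw [← Finset.card_sdiff_of_subset hT, ← Finset.card_powersetCard]
    refine Finset.card_nbij' (fun S => S \ T) (fun V => V ∪ T) ?_ ?_ ?_ ?_
    · intro S hS
      rw [Finset.mem_coe, Finset.mem_filter, Finset.mem_powersetCard] at hS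
      obtain ⟨⟨hSC, hScard⟩, hTS⟩ := hS
      rw [Finset.mem_coe, Finset.mem_powersetCard]
      constructor
      · exact Finset.sdiff_subset_sdiff hSC (le_refl T)
      · rw [Finset.card_sdiff_of_subset hTS, hScard]
    · intro V hV
      rw [Finset.mem_coe, Finset.mem_powersetCard] at hV
      obtain ⟨hVC, hVcard⟩ := hV
      have hdisj : Disjoint V T := Finset.disjoint_of_subset_left hVC Finset.sdiff_disjoint
      rw [Finset.mem_coe, Finset.mem_filter, Finset.mem_powersetCard]
      refine ⟨⟨Finset.union_subset (hVC.trans Finset.sdiff_subset) hT, ?_⟩,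
        Finset.subset_union_right⟩
      rw [Finset.card_union_of_disjoint hdisj, hVcard]
      omega
    · intro S hS
      rw [Finset.mem_coe, Finset.mem_filter] at hS
      exact Finset.sdiff_union_of_subset hS.2
    · intro V hV
      rw [Finset.mem_coe, Finset.mem_powersetCard] at hV
      exact Finset.union_sdiff_cancel_right
        (Finset.disjoint_of_subset_left hV.1 Finset.sdiff_disjoint)
  · rw [Finset.card_eq_zero, Finset.filter_eq_empty_iff]
    intro S hS hTS
    rw [Finset.mem_powersetCard] at hS
    exact h ((Finset.card_le_card hTS).trans hS.2.le)

private lemma aux_kill {A : Type*} [Ring A] (ψf : ι → A) (b : A)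
    (hb : ∀ i, Commute b (ψf i)) (j : ι) (hbj : ψf j * b = 0) :
    ∀ l : List ι, j ∈ l → (l.map ψf).prod * b = 0 := by
  intro l hl
  induction l with
  | nil => simp at hl
  | cons a t ih =>
    rw [List.map_cons, List.prod_cons, mul_assoc]
    rcases List.mem_cons.1 hl with rfl | hjt
    · have hq : Commute b ((t.map ψf).prod) := by
        apply Commute.list_prod_right
        intro y hy
        rcases List.mem_map.1 hy with ⟨i, _, rfl⟩
        exact hb i
      rw [← hq.eq, ← mul_assoc, hbj, zero_mul]
    · rw [ih hjt, mul_zero]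

end Aux4

/-- Macdonald's relation `ψ₁ ⋯ ψ_k · R_k = 0` in `H^*(Sym^d Σ)`: in any
`ℂ`-algebra with anticommuting degree-one generators `ψ, ψ'`, a central element
`η`, and the Macdonald relations
`η^r ∏_{i∈I}(η - ψᵢψ'ᵢ) ∏_{j∈J} ψⱼ ∏_{k∈K} ψ'ₖ = 0` for disjoint `I,J,K` with
`r + 2|I| + |J| + |K| ≥ d+1`, the element
`R_k = ∑_{i=0}^{α} [C(d-k-α+1,i)/C(g-k,i)] (-θ)^i/i! · η^{α-i}`
(`α = ⌊(d-k)/2⌋+1`, `θ = ∑ ψᵢψ'ᵢ`) satisfies `ψ₁ ⋯ ψ_k · R_k = 0` for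
`0 ≤ k ≤ d`. -/
theorem stmt_4 (g d : ℕ) (hg : 1 ≤ g) (hd : d ≤ g - 1)
    (A : Type*) [Ring A] [Algebra ℂ A]
    (ψ ψ' : Fin g → A) (η : A)
    (hη : ∀ a : A, η * a = a * η)
    (hanti₁ : ∀ i j, ψ i * ψ j = - (ψ j * ψ i))
    (hanti₂ : ∀ i j, ψ' i * ψ' j = - (ψ' j * ψ' i))
    (hanti₃ : ∀ i j, ψ i * ψ' j = - (ψ' j * ψ i))
    (hrel : ∀ (r : ℕ) (I J K : Finset (Fin g)),
      Disjoint I J → Disjoint I K → Disjoint J K →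
      d + 1 ≤ r + 2 * I.card + J.card + K.card →
      η ^ r * ((I.sort (· ≤ ·)).map (fun i => η - ψ i * ψ' i)).prod *
        ((J.sort (· ≤ ·)).map ψ).prod * ((K.sort (· ≤ ·)).map ψ').prod = 0) :
    ∀ k : ℕ, k ≤ d →
      (((Finset.univ.filter (fun i : Fin g => (i : ℕ) < k)).sort (· ≤ ·)).map ψ).prod *
        (∑ i ∈ Finset.range (((d - k) / 2 + 1) + 1),
          ((((d - k - ((d - k) / 2 + 1) + 1).choose i : ℂ) / (((g - k).choose i : ℂ))) *
              ((-1) ^ i / (i.factorial : ℂ))) •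
            ((∑ j : Fin g, ψ j * ψ' j) ^ i * η ^ ((d - k) / 2 + 1 - i))) = 0 := by
  intro k hk
  have hkg : k ≤ g := by omega
  -- abbreviations
  set a : ℕ := (d - k) / 2 + 1 with hadef
  set s' : ℕ := d - k - a + 1 with hs'def
  set J : Finset (Fin g) := Finset.univ.filter (fun i : Fin g => (i : ℕ) < k) with hJdef
  set C : Finset (Fin g) := Finset.univ.filter (fun i : Fin g => ¬ (i : ℕ) < k) with hCdef
  set x : Fin g → A := fun j => ψ j * ψ' j with hxdef
  set θ : A := ∑ j : Fin g, ψ j * ψ' j with hθdef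
  set P : A := ((J.sort (· ≤ ·)).map ψ).prod with hPdef
  have hθx : θ = ∑ j : Fin g, x j := rfl
  -- basic algebra facts
  have hψ2 : ∀ i, ψ i * ψ i = 0 := by
    intro i
    have h1 : ψ i * ψ i + ψ i * ψ i = 0 := by
      nth_rewrite 1 [hanti₁ i i]; rw [neg_add_cancel]
    calc ψ i * ψ i = ((2:ℂ)⁻¹) • ((2:ℂ) • (ψ i * ψ i)) := by
          rw [smul_smul]; norm_num
      _ = ((2:ℂ)⁻¹) • (ψ i * ψ i + ψ i * ψ i) := by rw [two_smul]
      _ = 0 := by rw [h1, smul_zero]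
  have hcxψ : ∀ j i, Commute (x j) (ψ i) := by
    intro j i
    have h2 : ψ' j * ψ i = -(ψ i * ψ' j) := by rw [hanti₃ i j, neg_neg]
    have h3 : ψ j * ψ i = -(ψ i * ψ j) := by rw [hanti₁ i j, neg_neg]
    show (ψ j * ψ' j) * ψ i = ψ i * (ψ j * ψ' j)
    rw [mul_assoc, h2, mul_neg, ← mul_assoc, h3, neg_mul, neg_neg, mul_assoc]
  have hcxψ' : ∀ j i, Commute (x j) (ψ' i) := by
    intro j i
    have h2 : ψ' j * ψ' i = -(ψ' i * ψ' j) := by rw [hanti₂ i j, neg_neg]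
    have h3 : ψ j * ψ' i = -(ψ' i * ψ j) := hanti₃ j i
    show (ψ j * ψ' j) * ψ' i = ψ' i * (ψ j * ψ' j)
    rw [mul_assoc, h2, mul_neg, ← mul_assoc, h3, neg_mul, neg_neg, mul_assoc]
  have hcxx : ∀ i j, Commute (x i) (x j) := fun i j =>
    (hcxψ i j).mul_right (hcxψ' i j)
  have hcηa : ∀ b : A, Commute η b := fun b => hη b
  have hx2 : ∀ j, x j * x j = 0 := by
    intro j
    show x j * (ψ j * ψ' j) = 0
    rw [← mul_assoc, (hcxψ j j).eq]
    show ψ j * (ψ j * ψ' j) * ψ' j = 0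
    rw [← mul_assoc, hψ2 j, zero_mul, zero_mul]
  have hcxP : ∀ j, Commute (x j) P := by
    intro j
    apply Commute.list_prod_right
    intro y hy
    rcases List.mem_map.1 hy with ⟨i, _, rfl⟩
    exact hcxψ j i
  have hPx0 : ∀ j ∈ J, P * x j = 0 := by
    intro j hj
    refine aux_kill ψ (x j) (fun i => hcxψ j i) j ?_ _ ((Finset.mem_sort _).2 hj)
    show ψ j * (ψ j * ψ' j) = 0
    rw [← mul_assoc, hψ2 j, zero_mul]
  -- cardinalities
  have hcardJ : J.card = k := by
    have hJeq : J = Finset.map (Fin.castLEEmb hkg) Finset.univ := by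
      ext b
      simp only [hJdef, Finset.mem_filter, Finset.mem_univ, true_and, Finset.mem_map,
        Fin.castLEEmb_apply]
      constructor
      · intro hb; exact ⟨⟨b.val, hb⟩, rfl⟩
      · rintro ⟨c, rfl⟩; exact c.isLt
    rw [hJeq, Finset.card_map, Finset.card_univ, Fintype.card_fin]
  have hcardC : C.card = g - k := by
    have := Finset.card_filter_add_card_filter_not
      (s := (Finset.univ : Finset (Fin g))) (p := fun i : Fin g => (i : ℕ) < k)
    rw [← hJdef] at this
    have hC2 : (Finset.univ.filter fun i : Fin g => ¬ (i : ℕ) < k) = C := rfl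
    rw [hC2, Finset.card_univ, Fintype.card_fin, hcardJ] at this
    omega
  -- numeric facts
  have hnum1 : s' ≤ a := by omega
  have hnum2 : a ≤ g - k := by omega
  have hnum3 : s' ≤ g - k := by omega
  have hrelineq : d + 1 ≤ (a - s') + 2 * s' + k + 0 := by omega
  set θc : A := ∑ j ∈ C, x j with hθcdef
  have hsplit : θ = (∑ j ∈ J, x j) + θc := by
    rw [hθx, hθcdef, hJdef, hCdef]
    exact (Finset.sum_filter_add_sum_filter_not Finset.univ _ x).symm
  have hPθ : P * θ = P * θc := by
    rw [hsplit, mul_add, Finset.mul_sum, Finset.sum_eq_zero hPx0, zero_add]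
  have hcθcP : Commute θc P := Commute.sum_left _ _ _ (fun j _ => hcxP j)
  have hPθi : ∀ i : ℕ, P * θ ^ i = P * θc ^ i := by
    intro i
    induction i with
    | zero => rw [pow_zero, pow_zero]
    | succ i ih =>
      rw [pow_succ', ← mul_assoc, hPθ, ← hcθcP.eq, mul_assoc, ih, ← mul_assoc,
        hcθcP.eq, mul_assoc, ← pow_succ']
  have hcomm2 : ∀ S : Finset (Fin g),
      Commute P (η ^ (a - s') * sprodA (fun i => η - x i) S) :=
    fun S => (((hcηa P).symm).pow_right _).mul_right
      (commute_sprodA (fun i => η - x i) P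
        (fun i => ((hcηa P).symm).sub_right (hcxP i).symm) S)
  have hzero : ∀ S ∈ C.powersetCard s',
      P * (η ^ (a - s') * sprodA (fun i => η - x i) S) = 0 := by
    intro S hS
    obtain ⟨hSC, hScard⟩ := Finset.mem_powersetCard.1 hS
    have hdisjSJ : Disjoint S J := by
      rw [Finset.disjoint_left]
      intro b hb hbJ
      have hbC := hSC hb
      rw [hCdef, Finset.mem_filter] at hbC
      rw [hJdef, Finset.mem_filter] at hbJ
      exact hbC.2 hbJ.2
    have h0 := hrel (a - s') S J ∅ hdisjSJ (Finset.disjoint_empty_right _)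
      (Finset.disjoint_empty_right _)
      (by rw [hScard, hcardJ, Finset.card_empty]; omega)
    simp only [Finset.sort_empty, List.map_nil, List.prod_nil, mul_one] at h0
    have hFS : sprodA (fun i => η - x i) S
        = ((S.sort (· ≤ ·)).map (fun i => η - ψ i * ψ' i)).prod := rfl
    rw [(hcomm2 S).eq, hFS]
    exact h0
  have hKey : (∑ i ∈ Finset.range (a + 1),
        ((((s').choose i : ℂ) / (((g - k).choose i : ℂ))) *
          ((-1) ^ i / (i.factorial : ℂ))) • (θc ^ i * η ^ (a - i)))
      = ((((g - k).choose s' : ℂ))⁻¹) •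
          ∑ S ∈ C.powersetCard s', η ^ (a - s') * sprodA (fun i => η - x i) S := by
    have hL : (∑ i ∈ Finset.range (a + 1),
          (((s'.choose i : ℂ) / (((g - k).choose i : ℂ))) *
            ((-1) ^ i / (i.factorial : ℂ))) • (θc ^ i * η ^ (a - i)))
        = ∑ T ∈ C.powerset,
            (((s'.choose T.card : ℂ) / (((g - k).choose T.card : ℂ))) * (-1) ^ T.card) •
              (sprodA x T * η ^ (a - T.card)) := by
      have h1 : ∀ i ∈ Finset.range (a + 1),
          (((s'.choose i : ℂ) / (((g - k).choose i : ℂ))) *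
            ((-1) ^ i / (i.factorial : ℂ))) • (θc ^ i * η ^ (a - i))
          = ∑ T ∈ C.powersetCard i,
              (((s'.choose T.card : ℂ) / (((g - k).choose T.card : ℂ))) * (-1) ^ T.card) •
                (sprodA x T * η ^ (a - T.card)) := by
        intro i _
        rw [hθcdef, aux_pow_sum x hcxx hx2 C i, smul_mul_assoc, Finset.sum_mul,
          ← Nat.cast_smul_eq_nsmul ℂ, smul_smul, Finset.smul_sum]
        refine Finset.sum_congr rfl fun T hT => ?_
        have ht : T.card = i := (Finset.mem_powersetCard.1 hT).2
        rw [ht]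
        congr 1
        rw [mul_assoc, div_mul_cancel₀ _ (by exact_mod_cast i.factorial_ne_zero)]
      rw [Finset.sum_congr rfl h1, Finset.sum_powerset]
      refine Finset.sum_subset (Finset.range_subset_range.2 (by omega)) ?_
      intro i _ hi
      refine Finset.sum_eq_zero fun T hT => ?_
      have ht : T.card = i := (Finset.mem_powersetCard.1 hT).2
      have hlt : s' < T.card := by
        simp only [Finset.mem_range] at hi; omega
      rw [Nat.choose_eq_zero_of_lt hlt, Nat.cast_zero, zero_div, zero_mul, zero_smul]
    have hR : ((((g - k).choose s' : ℂ))⁻¹) •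
          ∑ S ∈ C.powersetCard s', η ^ (a - s') * sprodA (fun i => η - x i) S
        = ∑ T ∈ C.powerset,
            (((s'.choose T.card : ℂ) / (((g - k).choose T.card : ℂ))) * (-1) ^ T.card) •
              (sprodA x T * η ^ (a - T.card)) := by
      have h2 : ∀ S ∈ C.powersetCard s', η ^ (a - s') * sprodA (fun i => η - x i) S
          = ∑ T ∈ S.powerset, ((-1 : ℂ) ^ T.card) • (sprodA x T * η ^ (a - T.card)) := by
        intro S hS
        obtain ⟨hSC, hScard⟩ := Finset.mem_powersetCard.1 hS
        rw [aux_prod_expand η x hcxx (fun j => hcηa (x j)) S, Finset.mul_sum]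
        refine Finset.sum_congr rfl fun T hT => ?_
        have htcard : T.card ≤ s' := by
          rw [← hScard]; exact Finset.card_le_card (Finset.mem_powerset.1 hT)
        rw [mul_smul_comm, ← Int.cast_smul_eq_zsmul ℂ, hScard]
        push_cast
        congr 1
        rw [← mul_assoc,
          ((commute_sprodA x (η ^ (a - s')) (fun j => (hcηa (x j)).pow_left _) T).eq),
          mul_assoc, ← pow_add]
        congr 2
        omega
      rw [Finset.sum_congr rfl h2, aux_swap, Finset.smul_sum]
      refine Finset.sum_congr rfl fun T hT => ?_
      have hTC : T ⊆ C := Finset.mem_powerset.1 hT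
      have htm : T.card ≤ g - k := by
        rw [← hcardC]; exact Finset.card_le_card hTC
      rw [aux_count C T hTC s', hcardC, ← Nat.cast_smul_eq_nsmul ℂ, smul_smul, smul_smul]
      congr 1
      have hchooset : (((g - k).choose T.card : ℕ) : ℂ) ≠ 0 := by
        exact_mod_cast (Nat.choose_pos htm).ne'
      have hchooses : (((g - k).choose s' : ℕ) : ℂ) ≠ 0 := by
        exact_mod_cast (Nat.choose_pos hnum3).ne'
      by_cases hts : T.card ≤ s'
      · rw [if_pos hts]
        have hnat := Nat.choose_mul (n := g - k) hts
        have hC : (((g - k).choose s' : ℕ) : ℂ) * ((s'.choose T.card : ℕ) : ℂ)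
            = (((g - k).choose T.card : ℕ) : ℂ) * ((((g - k) - T.card).choose (s' - T.card) : ℕ) : ℂ) := by
          exact_mod_cast hnat
        congr 1
        rw [inv_mul_eq_div, div_eq_div_iff hchooses hchooset]
        linear_combination -hC
      · rw [if_neg hts, Nat.choose_eq_zero_of_lt (by omega : s' < T.card)]
        push_cast
        rw [zero_div, zero_mul, mul_zero, zero_mul]
    rw [hL, hR]
  calc P * (∑ i ∈ Finset.range (a + 1),
        ((((s').choose i : ℂ) / (((g - k).choose i : ℂ))) *
          ((-1) ^ i / (i.factorial : ℂ))) • (θ ^ i * η ^ (a - i)))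
      = P * (∑ i ∈ Finset.range (a + 1),
        ((((s').choose i : ℂ) / (((g - k).choose i : ℂ))) *
          ((-1) ^ i / (i.factorial : ℂ))) • (θc ^ i * η ^ (a - i))) := by
        rw [Finset.mul_sum, Finset.mul_sum]
        refine Finset.sum_congr rfl fun i _ => ?_
        rw [mul_smul_comm, mul_smul_comm, ← mul_assoc, ← mul_assoc, hPθi i]
    _ = 0 := by
        rw [hKey, mul_smul_comm, Finset.mul_sum, Finset.sum_congr rfl hzero,
          Finset.sum_const, smul_zero, smul_zero]
end

section
/- Let m >= 1 and let A be a commutative C[[t]]-algebra, free of finite rank as a C[[t]]-module, with elements beta, gamma such that gamma^m = 0, the monomials beta^i gamma^j with 2i + j < m form a C[[t]]-basis, and for each s with 0 <= s < m there is a relation gamma^s * beta^{d_s + 1} = sum over {2i + j < m - s, i + j >= d_s + 1, j > 0} of c_{ij} beta^i gamma^{j+s} with c_{ij} in C[[t]], where d_s = floor((m - s - 1)/2). Then beta^{n} gamma^{p} = 0 in A whenever n + p >= m. -/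
/-- Fukaya–Floer nilpotency bound (Corollary 3.4): over `ℂ[[t]]`, with
`γ^m = 0`, basis `β^i γ^j` (`2i + j < m`) and relations
`γ^s β^{d_s+1} = ∑ c_{ij} β^i γ^{j+s}` over `2i+j < m-s`, `i+j ≥ d_s+1`,
`j > 0`, where `d_s = ⌊(m-s-1)/2⌋`, any monomial `β^n γ^p` with
`n + p ≥ m` vanishes. -/
theorem stmt_15 (m : ℕ) (hm : 1 ≤ m) (A : Type*) [CommRing A]
    [Algebra (PowerSeries ℂ) A]
    [Module.Free (PowerSeries ℂ) A] [Module.Finite (PowerSeries ℂ) A]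
    (β γ : A) (hγ : γ ^ m = 0)
    (hbasis : ∃ b : Module.Basis {q : ℕ × ℕ // 2 * q.1 + q.2 < m} (PowerSeries ℂ) A,
      ∀ q, b q = β ^ q.val.1 * γ ^ q.val.2)
    (hrel : ∀ s, s < m → ∃ c : ℕ → ℕ → PowerSeries ℂ,
      γ ^ s * β ^ ((m - s - 1) / 2 + 1) =
        ∑ p ∈ (Finset.range m ×ˢ Finset.range m).filter
            (fun p => 2 * p.1 + p.2 < m - s ∧ (m - s - 1) / 2 + 1 ≤ p.1 + p.2 ∧ 0 < p.2),
          c p.1 p.2 • (β ^ p.1 * γ ^ (p.2 + s))) :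
    ∀ n p : ℕ, m ≤ n + p → β ^ n * γ ^ p = 0 := by
  suffices H : ∀ k n p, m ≤ n + p → m - p ≤ k → β ^ n * γ ^ p = 0 by
    intro n p h; exact H (m - p) n p h le_rfl
  intro k
  induction k with
  | zero =>
    intro n p h hk
    have : γ ^ p = 0 := by
      rw [show p = m + (p - m) by omega, pow_add, hγ, zero_mul]
    rw [this, mul_zero]
  | succ k ih =>
    intro n p h hk
    by_cases hp : m ≤ p
    · have : γ ^ p = 0 := by
        rw [show p = m + (p - m) by omega, pow_add, hγ, zero_mul]
      rw [this, mul_zero]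
    push_neg at hp
    obtain ⟨c, hc⟩ := hrel p hp
    set d := (m - p - 1) / 2 with hd
    have hdn : d + 1 ≤ n := by omega
    have hsplit : β ^ n * γ ^ p = β ^ (n - (d + 1)) * (γ ^ p * β ^ (d + 1)) := by
      rw [show β ^ (n - (d + 1)) * (γ ^ p * β ^ (d + 1)) =
          β ^ (n - (d + 1)) * β ^ (d + 1) * γ ^ p by ring, ← pow_add,
        Nat.sub_add_cancel hdn]
    rw [hsplit, hc, Finset.mul_sum]
    apply Finset.sum_eq_zero
    intro q hq
    simp only [Finset.mem_filter, Finset.mem_product, Finset.mem_range] at hq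
    obtain ⟨⟨-, -⟩, h1, h2, h3⟩ := hq
    rw [mul_smul_comm]
    have hm2 : β ^ (n - (d + 1)) * (β ^ q.1 * γ ^ (q.2 + p)) =
        β ^ (n - (d + 1) + q.1) * γ ^ (q.2 + p) := by rw [pow_add]; ring
    rw [hm2, ih _ _ (by omega) (by omega), smul_zero]
end
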